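/- Let V be a real inner product space, u_1, …, u_N ∈ V snapshot vectors, and C ∈ ℝ^{N×N} the Gram matrix C_{ij} = ⟨u_i, u_j⟩. Let q_1, …, q_N be an orthonormal basis of ℝ^N of eigenvectors of C with eigenvalues λ_1 ≥ λ_2 ≥ … ≥ λ_N ≥ 0, and for λ_i > 0 set φ_i := λ_i^{-1/2} Σ_n (q_i)_n u_n. For 1 ≤ r ≤ N let P_r denote the orthogonal projection of V onto span{φ_1, …, φ_r}. Then the total squared reconstruction error of the snapshots equals the sum of the discarded eigenvalues: Σ_{n=1}^{N} ‖u_n − P_r u_n‖² = Σ_{i=r+1}^{N} λ_i. -/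

import Mathlib

open scoped RealInnerProductSpace Matrix

/-- With eigenvalues of the snapshot Gram matrix sorted in decreasing order and POD modes
`φ i = λ i ^ (-1/2) • ∑ n, (q i) n • u n` (which vanish for zero eigenvalues), the total
squared error of orthogonally projecting the snapshots onto the span of the first `r`
POD modes equals the sum of the discarded eigenvalues `λ_{r+1} + ⋯ + λ_N`. -/
theorem pod_truncation_error_eq_tail_eigenvalues
    {V : Type*} [NormedAddCommGroup V] [InnerProductSpace ℝ V]
    (N : ℕ) (u : Fin N → V)
    (C : Matrix (Fin N) (Fin N) ℝ)
    (hC : ∀ i j, C i j = ⟪u i, u j⟫)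
    (q : Fin N → (Fin N → ℝ)) (lam : Fin N → ℝ)
    (hnonneg : ∀ i, 0 ≤ lam i)
    (hsorted : ∀ i j : Fin N, i ≤ j → lam j ≤ lam i)
    (heig : ∀ i, C.mulVec (q i) = lam i • q i)
    (horth : ∀ i j, q i ⬝ᵥ q j = if i = j then (1 : ℝ) else 0)
    (φ : Fin N → V)
    (hφ : ∀ i, φ i = (Real.sqrt (lam i))⁻¹ • ∑ n, q i n • u n)
    (r : ℕ) (hr1 : 1 ≤ r) (hrN : r ≤ N)
    -- `P` is the orthogonal projection of `V` onto `span {φ_1, …, φ_r}`: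
    (P : V → V)
    (hPmem : ∀ v, P v ∈ Submodule.span ℝ (φ '' {i : Fin N | (i : ℕ) < r}))
    (hPorth : ∀ v, ∀ w ∈ Submodule.span ℝ (φ '' {i : Fin N | (i : ℕ) < r}),
      ⟪v - P v, w⟫ = 0) :
    ∑ n, ‖u n - P (u n)‖ ^ 2 =
      ∑ i ∈ Finset.univ.filter (fun i : Fin N => r ≤ (i : ℕ)), lam i := by
  classical
  set S : Set (Fin N) := {i : Fin N | (i : ℕ) < r} with hS
  set F : Finset (Fin N) := Finset.univ.filter (fun i : Fin N => (i : ℕ) < r) with hF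
  -- inner products of snapshots with modes
  have hinner : ∀ n i, ⟪u n, φ i⟫ = Real.sqrt (lam i) * q i n := by
    intro n i
    rw [hφ, real_inner_smul_right, inner_sum]
    have h1 : (∑ m, ⟪u n, q i m • u m⟫) = (C.mulVec (q i)) n := by
      simp [Matrix.mulVec, dotProduct, hC, real_inner_smul_right, mul_comm]
    rw [h1, heig]
    simp only [Pi.smul_apply, smul_eq_mul]
    rcases eq_or_lt_of_le (hnonneg i) with h | h
    · simp [← h]
    · have hs : Real.sqrt (lam i) ≠ 0 := by positivity
      have hm : (Real.sqrt (lam i))⁻¹ * lam i = Real.sqrt (lam i) := by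
        field_simp
        rw [Real.sq_sqrt (hnonneg i)]
      rw [← mul_assoc, hm]
  -- inner products among modes
  have hphi : ∀ i j, ⟪φ i, φ j⟫ =
      if i = j then (if lam i = 0 then (0 : ℝ) else 1) else 0 := by
    intro i j
    rw [hφ i, real_inner_smul_left, sum_inner]
    have h1 : (∑ n, ⟪q i n • u n, φ j⟫) = Real.sqrt (lam j) * (q i ⬝ᵥ q j) := by
      rw [dotProduct, Finset.mul_sum]
      refine Finset.sum_congr rfl fun n _ => ?_
      rw [real_inner_smul_left, hinner]; ring
    rw [h1, horth]
    by_cases hij : i = j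
    · subst hij
      rw [if_pos rfl, if_pos rfl, mul_one]
      rcases eq_or_lt_of_le (hnonneg i) with h | h
      · simp [← h]
      · have hs : Real.sqrt (lam i) ≠ 0 := by positivity
        rw [if_neg h.ne', inv_mul_cancel₀ hs]
    · simp [hij]
  -- the explicit candidate projection of u n
  set Q : Fin N → V := fun n => ∑ i ∈ F, ⟪u n, φ i⟫ • φ i with hQ
  -- u n - Q n is orthogonal to the span
  have hkey : ∀ n, ∀ w ∈ Submodule.span ℝ (φ '' S), ⟪u n - Q n, w⟫ = 0 := by
    intro n w hw
    induction hw using Submodule.span_induction with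
    | mem x hx =>
      obtain ⟨j, hj, rfl⟩ := hx
      have hjF : j ∈ F := Finset.mem_filter.mpr ⟨Finset.mem_univ _, hj⟩
      rw [inner_sub_left, hQ, sum_inner]
      have h2 : (∑ i ∈ F, ⟪⟪u n, φ i⟫ • φ i, φ j⟫) = ⟪u n, φ j⟫ := by
        rw [Finset.sum_eq_single j]
        · rw [real_inner_smul_left, hphi, if_pos rfl]
          by_cases h0 : lam j = 0
          · simp [h0, hinner n j]
          · simp [h0]
        · intro i _ hij
          rw [real_inner_smul_left, hphi, if_neg hij, mul_zero]
        · intro h; exact absurd hjF h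
      rw [h2, sub_self]
    | zero => simp
    | add x y hx hy ihx ihy => rw [inner_add_right, ihx, ihy, add_zero]
    | smul a x hx ihx => rw [real_inner_smul_right, ihx, mul_zero]
  -- per-snapshot error formula
  have hperp : ∀ n, ‖u n - P (u n)‖ ^ 2 = ‖u n‖ ^ 2 - ∑ i ∈ F, lam i * (q i n) ^ 2 := by
    intro n
    have h1 : ‖u n - P (u n)‖ ^ 2 = ⟪u n - P (u n), u n⟫ := by
      rw [← real_inner_self_eq_norm_sq]
      have h0 := hPorth (u n) (P (u n)) (hPmem (u n))
      rw [inner_sub_right, h0, sub_zero]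
    have h2 : ⟪P (u n), u n⟫ = ∑ i ∈ F, lam i * (q i n) ^ 2 := by
      have ha : ⟪u n - Q n, P (u n)⟫ = 0 := hkey n _ (hPmem (u n))
      have hb : ⟪P (u n), u n⟫ = ⟪P (u n), Q n⟫ := by
        have hc : ⟪P (u n), u n - Q n⟫ = 0 := by rw [real_inner_comm]; exact ha
        rw [inner_sub_right] at hc; linarith
      rw [hb, hQ, inner_sum]
      refine Finset.sum_congr rfl fun i hi => ?_
      have hiS : i ∈ S := (Finset.mem_filter.mp hi).2
      have hspan : φ i ∈ Submodule.span ℝ (φ '' S) :=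
        Submodule.subset_span ⟨i, hiS, rfl⟩
      have hc : ⟪u n - P (u n), φ i⟫ = 0 := hPorth (u n) _ hspan
      rw [inner_sub_left] at hc
      have hd : ⟪P (u n), φ i⟫ = ⟪u n, φ i⟫ := by linarith
      rw [real_inner_smul_right, hd, hinner]
      have hsq : Real.sqrt (lam i) * Real.sqrt (lam i) = lam i :=
        Real.mul_self_sqrt (hnonneg i)
      ring_nf
      nlinarith [hsq]
    rw [h1, inner_sub_left, real_inner_self_eq_norm_sq, h2]
  -- column orthonormality
  have hQQt : ∀ n m, (∑ i, q i n * q i m) = if n = m then (1 : ℝ) else 0 := by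
    have hQ1 : (Matrix.of q) * (Matrix.of q)ᵀ = 1 := by
      ext i j
      simpa [Matrix.mul_apply, dotProduct, Matrix.one_apply] using horth i j
    have hQ2 : (Matrix.of q)ᵀ * (Matrix.of q) = 1 := mul_eq_one_comm.mp hQ1
    intro n m
    have h := congrFun (congrFun hQ2 n) m
    simpa [Matrix.mul_apply, Matrix.one_apply] using h
  have hnormq : ∀ i, (∑ n, (q i n) ^ 2) = 1 := by
    intro i
    have h := horth i i
    simp only [dotProduct, if_pos rfl] at h
    simpa [sq] using h
  -- trace identity
  have h2 : ∀ i, lam i = ∑ n, q i n * (C.mulVec (q i)) n := by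
    intro i
    rw [heig]
    simp only [Pi.smul_apply, smul_eq_mul]
    have h3 : (∑ n, q i n * (lam i * q i n)) = lam i * ∑ n, (q i n) ^ 2 := by
      rw [Finset.mul_sum]; exact Finset.sum_congr rfl fun n _ => by ring
    rw [h3, hnormq, mul_one]
  have htrace : (∑ i, lam i) = ∑ n, ‖u n‖ ^ 2 := by
    have hCnorm : ∀ n, C n n = ‖u n‖ ^ 2 := fun n => by
      rw [hC, real_inner_self_eq_norm_sq]
    calc ∑ i, lam i = ∑ i, ∑ n, ∑ m, q i n * (C n m * q i m) := by
          refine Finset.sum_congr rfl fun i _ => ?_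
          rw [h2 i]
          refine Finset.sum_congr rfl fun n _ => ?_
          rw [Matrix.mulVec, dotProduct, Finset.mul_sum]
      _ = ∑ n, ∑ m, C n m * (∑ i, q i n * q i m) := by
          rw [Finset.sum_comm]
          refine Finset.sum_congr rfl fun n _ => ?_
          rw [Finset.sum_comm]
          refine Finset.sum_congr rfl fun m _ => ?_
          rw [Finset.mul_sum]
          exact Finset.sum_congr rfl fun i _ => by ring
      _ = ∑ n, C n n := by
          refine Finset.sum_congr rfl fun n _ => ?_
          simp [hQQt, mul_ite]
      _ = ∑ n, ‖u n‖ ^ 2 := Finset.sum_congr rfl fun n _ => hCnorm n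
  -- put everything together
  calc ∑ n, ‖u n - P (u n)‖ ^ 2
      = ∑ n, (‖u n‖ ^ 2 - ∑ i ∈ F, lam i * (q i n) ^ 2) :=
        Finset.sum_congr rfl fun n _ => hperp n
    _ = (∑ n, ‖u n‖ ^ 2) - ∑ n, ∑ i ∈ F, lam i * (q i n) ^ 2 :=
        Finset.sum_sub_distrib _ _
    _ = (∑ i, lam i) - ∑ i ∈ F, lam i := by
        rw [← htrace, Finset.sum_comm]
        congr 1
        refine Finset.sum_congr rfl fun i _ => ?_
        rw [← Finset.mul_sum, hnormq, mul_one]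
    _ = ∑ i ∈ Finset.univ.filter (fun i : Fin N => r ≤ (i : ℕ)), lam i := by
        have hsplit := Finset.sum_filter_add_sum_filter_not Finset.univ
          (fun i : Fin N => (i : ℕ) < r) lam
        have hpred : Finset.univ.filter (fun i : Fin N => ¬ (i : ℕ) < r) =
            Finset.univ.filter (fun i : Fin N => r ≤ (i : ℕ)) := by
          exact Finset.filter_congr fun i _ => by simp [not_lt]
        have hsplit' : (∑ x ∈ F, lam x) +
            ∑ x ∈ Finset.univ.filter (fun x : Fin N => ¬ (x : ℕ) < r), lam x =
            ∑ x, lam x := hsplit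
        rw [← hpred]
        linarith [hsplit']
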